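/- Let P be a poset and F : P → Ab a functor (a cellular cosheaf). Define a precosheaf F̂ on the Alexandroff space X(P) by F̂(U) = colim over x ∈ U of F(x), where U is regarded as a full subposet of P. Then F̂ is a cosheaf: for every open set U and every open cover 𝒰 of U, the natural map colim over the nerve N(𝒰) of F̂ to F̂(U) is an isomorphism. -/

import Mathlib

open CategoryTheory CategoryTheory.Limits TopologicalSpace



/-- The minimal open set containing `x`. -/
def minOpen {X : Type} [TopologicalSpace X] (x : X) : Set X :=
  ⋂₀ {U : Set X | IsOpen U ∧ x ∈ U}

lemma isOpen_minOpen {X : Type} [TopologicalSpace X] [AlexandrovDiscrete X] (x : X) :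
    IsOpen (minOpen x) :=
  isOpen_sInter fun _ h => h.1

/-- The minimal open set containing `x`, as an element of `Opens X`. -/
def Uo {X : Type} [TopologicalSpace X] [AlexandrovDiscrete X] (x : X) : Opens X :=
  ⟨minOpen x, isOpen_minOpen x⟩

lemma minOpen_le {X : Type} [TopologicalSpace X] {x : X} {U : Opens X} (hx : x ∈ U) :
    minOpen x ⊆ (U : Set X) :=
  Set.sInter_subset_of_mem ⟨U.isOpen, hx⟩

/-- A precosheaf of abelian groups on `X`: a covariant functor on open sets. -/
abbrev Precosheaf (X : Type) [TopologicalSpace X] := Opens X ⥤ AddCommGrpCat.{0}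

variable {X : Type} [TopologicalSpace X]

/-- The nerve of an open cover: the nonempty finite intersections of its members. -/
def nerveSet (𝒰 : Set (Opens X)) : Set (Opens X) :=
  {V | (V : Set X).Nonempty ∧ ∃ s : Finset (Opens X), ↑s ⊆ 𝒰 ∧ s.Nonempty ∧ V = s.inf id}

lemma nerve_le {𝒰 : Set (Opens X)} {U : Opens X} (h : ∀ V ∈ 𝒰, V ≤ U)
    {V : Opens X} (hV : V ∈ nerveSet 𝒰) : V ≤ U := by
  obtain ⟨-, s, hs, ⟨w, hw⟩, rfl⟩ := hV
  exact le_trans (Finset.inf_le hw) (h w (hs hw))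

/-- The diagram of a precosheaf over the nerve of an open cover. -/
def nerveDiagram (F : Precosheaf X) (𝒰 : Set (Opens X)) :
    ObjectProperty.FullSubcategory (· ∈ nerveSet 𝒰) ⥤ AddCommGrpCat.{0} :=
  ObjectProperty.ι (· ∈ nerveSet 𝒰) ⋙ F

/-- The canonical cocone on the nerve diagram with apex `F(U)`. -/
def coverCocone (F : Precosheaf X) (U : Opens X) (𝒰 : Set (Opens X))
    (h : ∀ V ∈ 𝒰, V ≤ U) : Cocone (nerveDiagram F 𝒰) where
  pt := F.obj U
  ι :=
    { app := fun V => F.map (homOfLE (nerve_le h V.2))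
      naturality := fun a b f => by
        dsimp [nerveDiagram]
        rw [Category.comp_id, ← F.map_comp]
        rfl }

/-- A precosheaf is a cosheaf if for every open `U` and every open cover `𝒰` of `U`, the
canonical map from the colimit over the nerve of `𝒰` to `F(U)` is an isomorphism, i.e.
`F(U)` is the colimit of the nerve diagram. -/
def IsCosheaf (F : Precosheaf X) : Prop :=
  ∀ (U : Opens X) (𝒰 : Set (Opens X)) (h𝒰 : ∀ V ∈ 𝒰, V ≤ U), U ≤ sSup 𝒰 →
    Nonempty (IsColimit (coverCocone F U 𝒰 h𝒰))

/-- The Alexandroff space `X(P)` of a poset `P`: open sets are the up-sets. -/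
def upTop (P : Type) [Preorder P] : TopologicalSpace P where
  IsOpen := IsUpperSet
  isOpen_univ := isUpperSet_univ
  isOpen_inter _ _ := IsUpperSet.inter
  isOpen_sUnion _ h := isUpperSet_sUnion h

variable {P : Type} [PartialOrder P]

/-- The diagram of a cellular cosheaf `F : P ⥤ Ab` over the subposet `U ⊆ P`. -/
def openDiagram (F : P ⥤ AddCommGrpCat.{0}) (U : Set P) :
    ObjectProperty.FullSubcategory (· ∈ U) ⥤ AddCommGrpCat.{0} :=
  ObjectProperty.ι (· ∈ U) ⋙ F

noncomputable def hatMap (F : P ⥤ AddCommGrpCat.{0}) {U V : Set P} (h : U ⊆ V) :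
    colimit (openDiagram F U) ⟶ colimit (openDiagram F V) :=
  colimit.pre (openDiagram F V) (ObjectProperty.ιOfLE fun _ hx => h hx)

lemma hatMap_ι (F : P ⥤ AddCommGrpCat.{0}) {U V : Set P} (h : U ⊆ V)
    (j : ObjectProperty.FullSubcategory (· ∈ U)) :
    colimit.ι (openDiagram F U) j ≫ hatMap F h =
      colimit.ι (openDiagram F V) ⟨j.1, h j.2⟩ := by
  exact colimit.ι_pre (openDiagram F V) (ObjectProperty.ιOfLE fun _ hx => h hx) j

/-- The cosheaf `F̂` on `X(P)` associated to a cellular cosheaf `F : P ⥤ Ab`,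
with `F̂(U) = colim_{x ∈ U} F(x)`. -/
noncomputable def hatF (F : P ⥤ AddCommGrpCat.{0}) :
    @TopologicalSpace.Opens P (upTop P) ⥤ AddCommGrpCat.{0} where
  obj U := colimit (openDiagram F (U : Set P))
  map {U V} h := hatMap F h.le
  map_id U := by
    apply colimit.hom_ext
    intro j
    refine (hatMap_ι F (fun _ hx => hx) j).trans ?_
    simp
  map_comp {U V W} f g := by
    apply colimit.hom_ext
    intro j
    have hUV : (U : Set P) ⊆ V := f.le
    have hVW : (V : Set P) ⊆ W := g.le
    refine (hatMap_ι F (hUV.trans hVW) j).trans ?_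
    refine (hatMap_ι F hVW ⟨j.1, hUV j.2⟩).symm.trans ?_
    rw [← hatMap_ι F hUV j]
    exact Category.assoc _ _ _


section Aux

lemma mem_nerve_of_mem {X : Type} [TopologicalSpace X] {𝒰 : Set (Opens X)} {W : Opens X}
    (hW : W ∈ 𝒰) (hne : (W : Set X).Nonempty) : W ∈ nerveSet 𝒰 := by
  refine ⟨hne, {W}, by simpa using hW, ⟨W, Finset.mem_singleton_self W⟩, by simp⟩

lemma inf_mem_nerve {X : Type} [TopologicalSpace X] {𝒰 : Set (Opens X)} {V W : Opens X}
    (hV : V ∈ nerveSet 𝒰) (hW : W ∈ nerveSet 𝒰) (hne : ((V ⊓ W : Opens X) : Set X).Nonempty) :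
    V ⊓ W ∈ nerveSet 𝒰 := by
  classical
  obtain ⟨-, s, hs, hsne, rfl⟩ := hV
  obtain ⟨-, t, ht, htne, rfl⟩ := hW
  refine ⟨hne, s ∪ t, ?_, ⟨hsne.choose, Finset.mem_union_left _ hsne.choose_spec⟩, ?_⟩
  · intro x hx
    rcases Finset.mem_union.mp hx with h | h
    · exact hs h
    · exact ht h
  · rw [Finset.inf_union]

section Local

variable {Q : Type} [PartialOrder Q]

attribute [local instance] upTop

lemma key_aux (F : Q ⥤ AddCommGrpCat.{0}) (𝒰 : Set (Opens Q))
    (c : Cocone (nerveDiagram (hatF F) 𝒰)) (x : Q)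
    (V₁ V₂ : ObjectProperty.FullSubcategory (· ∈ nerveSet 𝒰)) (h1 : x ∈ V₁.obj) (h2 : x ∈ V₂.obj) :
    colimit.ι (openDiagram F (V₁.obj : Set Q)) ⟨x, h1⟩ ≫ c.ι.app V₁ =
      colimit.ι (openDiagram F (V₂.obj : Set Q)) ⟨x, h2⟩ ≫ c.ι.app V₂ := by
  have h3 : x ∈ V₁.obj ⊓ V₂.obj := ⟨h1, h2⟩
  have hmem : V₁.obj ⊓ V₂.obj ∈ nerveSet 𝒰 :=
    inf_mem_nerve V₁.property V₂.property ⟨x, h3⟩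
  set V₃ : ObjectProperty.FullSubcategory (· ∈ nerveSet 𝒰) := ⟨V₁.obj ⊓ V₂.obj, hmem⟩
  let f₁ : V₃ ⟶ V₁ := ObjectProperty.homMk (homOfLE inf_le_left)
  let f₂ : V₃ ⟶ V₂ := ObjectProperty.homMk (homOfLE inf_le_right)
  have e1 := c.w f₁
  have e2 := c.w f₂
  have g1 : colimit.ι (openDiagram F (V₃.obj : Set Q)) ⟨x, h3⟩ ≫
      (nerveDiagram (hatF F) 𝒰).map f₁ =
      colimit.ι (openDiagram F (V₁.obj : Set Q)) ⟨x, h1⟩ :=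
    hatMap_ι F (fun y hy => hy.1) ⟨x, h3⟩
  have g2 : colimit.ι (openDiagram F (V₃.obj : Set Q)) ⟨x, h3⟩ ≫
      (nerveDiagram (hatF F) 𝒰).map f₂ =
      colimit.ι (openDiagram F (V₂.obj : Set Q)) ⟨x, h2⟩ :=
    hatMap_ι F (fun y hy => hy.2) ⟨x, h3⟩
  have k1 : colimit.ι (openDiagram F (V₁.obj : Set Q)) ⟨x, h1⟩ ≫ c.ι.app V₁ =
      colimit.ι (openDiagram F (V₃.obj : Set Q)) ⟨x, h3⟩ ≫ c.ι.app V₃ :=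
    (congrArg (· ≫ c.ι.app V₁) g1.symm).trans ((Category.assoc _ _ _).trans (congrArg (_ ≫ ·) e1))
  have k2 : colimit.ι (openDiagram F (V₂.obj : Set Q)) ⟨x, h2⟩ ≫ c.ι.app V₂ =
      colimit.ι (openDiagram F (V₃.obj : Set Q)) ⟨x, h3⟩ ≫ c.ι.app V₃ :=
    (congrArg (· ≫ c.ι.app V₂) g2.symm).trans ((Category.assoc _ _ _).trans (congrArg (_ ≫ ·) e2))
  exact k1.trans k2.symm

/-- The descent cocone. -/
noncomputable def descCoconeAux (F : Q ⥤ AddCommGrpCat.{0}) (U : Opens Q) (𝒰 : Set (Opens Q))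
    (W : (x : Q) → x ∈ U → Opens Q) (hxW : ∀ x hx, x ∈ W x hx)
    (hWnerve : ∀ x hx, W x hx ∈ nerveSet 𝒰)
    (c : Cocone (nerveDiagram (hatF F) 𝒰)) : Cocone (openDiagram F (U : Set Q)) where
  pt := c.pt
  ι :=
    { app := fun j =>
        colimit.ι (openDiagram F ((W j.1 j.2 : Opens Q) : Set Q)) ⟨j.1, hxW j.1 j.2⟩ ≫
          c.ι.app ⟨W j.1 j.2, hWnerve j.1 j.2⟩
      naturality := fun a b f => by
        dsimp
        rw [Category.comp_id]
        have hyb : b.1 ∈ W a.1 a.2 := (W a.1 a.2).2 (leOfHom f.hom) (hxW a.1 a.2)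
        have k := key_aux F 𝒰 c b.1 ⟨W b.1 b.2, hWnerve b.1 b.2⟩ ⟨W a.1 a.2, hWnerve a.1 a.2⟩
          (hxW b.1 b.2) hyb
        have hw := colimit.w (openDiagram F ((W a.1 a.2 : Opens Q) : Set Q))
          (show (⟨a.1, hxW a.1 a.2⟩ : ObjectProperty.FullSubcategory (· ∈ ((W a.1 a.2 : Opens Q) : Set Q))) ⟶
            ⟨b.1, hyb⟩ from ObjectProperty.homMk f.hom)
        refine (congrArg ((openDiagram F (U : Set Q)).map f ≫ ·) k).trans ?_
        refine (Category.assoc _ _ _).symm.trans ?_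
        exact congrArg (· ≫ c.ι.app ⟨W a.1 a.2, hWnerve a.1 a.2⟩) hw }

/-- For a cellular cosheaf `F` over a poset `P`, the associated precosheaf `F̂` on the
Alexandroff space `X(P)` is a cosheaf. -/
theorem stmt_7 (P : Type) [PartialOrder P] (F : P ⥤ AddCommGrpCat.{0}) :
    @IsCosheaf P (upTop P) (hatF F) := by
  intro U 𝒰 h𝒰 hcov
  have hex : ∀ x ∈ U, ∃ V ∈ 𝒰, x ∈ V := fun x hx =>
    TopologicalSpace.Opens.mem_sSup.mp (hcov hx)
  choose W hW𝒰 hxW using hex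
  have hWnerve : ∀ (x : P) (hx : x ∈ U), W x hx ∈ nerveSet 𝒰 := fun x hx =>
    mem_nerve_of_mem (hW𝒰 x hx) ⟨x, hxW x hx⟩
  refine ⟨{ desc := fun c => colimit.desc (openDiagram F (U : Set P)) (descCoconeAux F U 𝒰 W hxW hWnerve c)
            fac := ?_
            uniq := ?_ }⟩
  · intro c V
    apply colimit.hom_ext
    intro j
    have h1 : colimit.ι (openDiagram F ((V.obj : Opens P) : Set P)) j ≫
        (coverCocone (hatF F) U 𝒰 h𝒰).ι.app V =
        colimit.ι (openDiagram F (U : Set P)) ⟨j.1, (nerve_le h𝒰 V.2) j.2⟩ :=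
      hatMap_ι F (nerve_le h𝒰 V.2 : V.obj ≤ U) j
    show (colimit.ι (openDiagram F ((V.obj : Opens P) : Set P)) j ≫
        (coverCocone (hatF F) U 𝒰 h𝒰).ι.app V) ≫
        colimit.desc (openDiagram F (U : Set P)) (descCoconeAux F U 𝒰 W hxW hWnerve c) =
      colimit.ι (openDiagram F ((V.obj : Opens P) : Set P)) j ≫ c.ι.app V
    have h2 := colimit.ι_desc (descCoconeAux F U 𝒰 W hxW hWnerve c) ⟨j.1, (nerve_le h𝒰 V.2) j.2⟩
    refine ((congrArg (· ≫ colimit.desc (openDiagram F (U : Set P))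
      (descCoconeAux F U 𝒰 W hxW hWnerve c)) h1).trans h2).trans ?_
    exact key_aux F 𝒰 c j.1 ⟨W j.1 _, hWnerve j.1 _⟩ V (hxW j.1 _) j.2
  · intro c m hm
    have hEq : ∀ (n : colimit (openDiagram F (U : Set P)) ⟶ c.pt),
        (∀ j, colimit.ι (openDiagram F (U : Set P)) j ≫ n =
          (descCoconeAux F U 𝒰 W hxW hWnerve c).ι.app j) →
        n = colimit.desc (openDiagram F (U : Set P)) (descCoconeAux F U 𝒰 W hxW hWnerve c) := by
      intro n hn
      apply colimit.hom_ext
      intro j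
      exact (hn j).trans (colimit.ι_desc _ _).symm
    refine hEq m fun j => ?_
    have h1 : colimit.ι (openDiagram F (U : Set P)) j =
        colimit.ι (openDiagram F ((W j.1 j.2 : Opens P) : Set P)) ⟨j.1, hxW j.1 j.2⟩ ≫
          (coverCocone (hatF F) U 𝒰 h𝒰).ι.app ⟨W j.1 j.2, hWnerve j.1 j.2⟩ :=
      (hatMap_ι F (nerve_le h𝒰 (hWnerve j.1 j.2) : W j.1 j.2 ≤ U) ⟨j.1, hxW j.1 j.2⟩).symm
    rw [h1]
    exact (Category.assoc _ _ _).trans (congrArg (_ ≫ ·) (hm ⟨W j.1 j.2, hWnerve j.1 j.2⟩))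

end Local

end Aux
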